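/- Let P : M₂(ℂ) → ℂ be the evaluation of a polynomial in the four matrix entries, and suppose P(h g h⁻¹) = P(g) for all g, h in SL(2,ℂ). Then there exists a single-variable polynomial q ∈ ℂ[X] such that P(g) = q(tr g) for every g in SL(2,ℂ). -/
import Mathlib


open Matrix Polynomial
open scoped MatrixGroups

/-- The candidate single-variable polynomial: `P` evaluated on the companion matrix
`!![0, -1; 1, X]`. -/
noncomputable def qPoly (P : MvPolynomial (Fin 2 × Fin 2) ℂ) : Polynomial ℂ :=
  MvPolynomial.aeval
    (fun p : Fin 2 × Fin 2 =>
      (!![0, -1; 1, Polynomial.X] : Matrix (Fin 2) (Fin 2) (Polynomial ℂ)) p.1 p.2) P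

lemma eval_aeval_mv (P : MvPolynomial (Fin 2 × Fin 2) ℂ) (f : Fin 2 × Fin 2 → Polynomial ℂ)
    (t : ℂ) :
    (MvPolynomial.aeval f P).eval t = MvPolynomial.eval (fun i => (f i).eval t) P := by
  induction P using MvPolynomial.induction_on with
  | C a => simp
  | add p q hp hq => simp [hp, hq]
  | mul_X p n hp => simp [hp]

lemma qPoly_eval (P : MvPolynomial (Fin 2 × Fin 2) ℂ) (t : ℂ) :
    (qPoly P).eval t =
      MvPolynomial.eval
        (fun p : Fin 2 × Fin 2 => (!![0, -1; 1, t] : Matrix (Fin 2) (Fin 2) ℂ) p.1 p.2) P := by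
  rw [qPoly, eval_aeval_mv]
  have hf : (fun i : Fin 2 × Fin 2 =>
      Polynomial.eval t ((!![0, -1; 1, Polynomial.X] : Matrix (Fin 2) (Fin 2) (Polynomial ℂ))
        i.1 i.2)) =
      fun p : Fin 2 × Fin 2 => (!![0, -1; 1, t] : Matrix (Fin 2) (Fin 2) ℂ) p.1 p.2 := by
    funext p
    obtain ⟨i, j⟩ := p
    fin_cases i <;> fin_cases j <;> simp
  rw [hf]

/-- Conjugating a non-scalar element of `SL(2,ℂ)` to the companion matrix of its
characteristic polynomial. -/
lemma conj_companion (g : SL(2, ℂ)) (v0 v1 : ℂ)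
    (hD : v0 * ((g : Matrix (Fin 2) (Fin 2) ℂ) 1 0 * v0 + (g : Matrix (Fin 2) (Fin 2) ℂ) 1 1 * v1)
        - v1 * ((g : Matrix (Fin 2) (Fin 2) ℂ) 0 0 * v0 + (g : Matrix (Fin 2) (Fin 2) ℂ) 0 1 * v1)
        ≠ 0) :
    ∃ h : SL(2, ℂ), ((h * g * h⁻¹ : SL(2, ℂ)) : Matrix (Fin 2) (Fin 2) ℂ) =
      !![0, -1; 1, (g : Matrix (Fin 2) (Fin 2) ℂ) 0 0 + (g : Matrix (Fin 2) (Fin 2) ℂ) 1 1] := by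
  set a := (g : Matrix (Fin 2) (Fin 2) ℂ) 0 0 with ha
  set b := (g : Matrix (Fin 2) (Fin 2) ℂ) 0 1 with hb
  set c := (g : Matrix (Fin 2) (Fin 2) ℂ) 1 0 with hc
  set d := (g : Matrix (Fin 2) (Fin 2) ℂ) 1 1 with hd
  have hdetg : a * d - b * c = 1 := by
    have h2 := g.2
    rw [Matrix.det_fin_two] at h2
    linear_combination h2
  set D := v0 * (c * v0 + d * v1) - v1 * (a * v0 + b * v1) with hDdef
  obtain ⟨z, hz⟩ := IsAlgClosed.exists_pow_nat_eq (k := ℂ) D⁻¹ (n := 2) (by norm_num)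
  have hz1 : z * z * D = 1 := by
    have : z * z = D⁻¹ := by rw [← hz]; ring
    rw [this, inv_mul_cancel₀ hD]
  have hdetS : Matrix.det (!![z * v0, z * (a * v0 + b * v1); z * v1, z * (c * v0 + d * v1)]
      : Matrix (Fin 2) (Fin 2) ℂ) = 1 := by
    rw [Matrix.det_fin_two_of]
    linear_combination hz1
  set σ : SL(2, ℂ) :=
    ⟨!![z * v0, z * (a * v0 + b * v1); z * v1, z * (c * v0 + d * v1)], hdetS⟩ with hσ
  refine ⟨σ⁻¹, ?_⟩
  have hcoe : ((σ⁻¹ * g * (σ⁻¹)⁻¹ : SL(2, ℂ)) : Matrix (Fin 2) (Fin 2) ℂ)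
      = (Matrix.adjugate (σ : Matrix (Fin 2) (Fin 2) ℂ)) * (g : Matrix (Fin 2) (Fin 2) ℂ)
        * (σ : Matrix (Fin 2) (Fin 2) ℂ) := by
    rw [inv_inv]
    simp [Matrix.SpecialLinearGroup.coe_inv]
  rw [hcoe]
  have hσcoe : (σ : Matrix (Fin 2) (Fin 2) ℂ)
      = !![z * v0, z * (a * v0 + b * v1); z * v1, z * (c * v0 + d * v1)] := rfl
  have hgeta : (g : Matrix (Fin 2) (Fin 2) ℂ) = !![a, b; c, d] := by
    rw [ha, hb, hc, hd]; exact Matrix.eta_fin_two _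
  rw [hσcoe, Matrix.adjugate_fin_two_of, hgeta]
  ext i j
  fin_cases i <;> fin_cases j <;>
    simp [Matrix.mul_apply, Fin.sum_univ_two]
  · ring
  · linear_combination (-(a * d - b * c)) * hz1 - hdetg
  · linear_combination hz1
  · linear_combination (a + d) * hz1

lemma main_nonscalar (P : MvPolynomial (Fin 2 × Fin 2) ℂ)
    (hinv : ∀ g h : SL(2, ℂ),
      MvPolynomial.eval
          (fun p => ((h * g * h⁻¹ : SL(2, ℂ)) : Matrix (Fin 2) (Fin 2) ℂ) p.1 p.2) P =
        MvPolynomial.eval (fun p => ((g : Matrix (Fin 2) (Fin 2) ℂ)) p.1 p.2) P)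
    (g : SL(2, ℂ))
    (hns : ¬((g : Matrix (Fin 2) (Fin 2) ℂ) 1 0 = 0 ∧ (g : Matrix (Fin 2) (Fin 2) ℂ) 0 1 = 0 ∧
        (g : Matrix (Fin 2) (Fin 2) ℂ) 0 0 = (g : Matrix (Fin 2) (Fin 2) ℂ) 1 1)) :
    MvPolynomial.eval (fun p => ((g : Matrix (Fin 2) (Fin 2) ℂ)) p.1 p.2) P =
      (qPoly P).eval ((g : Matrix (Fin 2) (Fin 2) ℂ) 0 0 + (g : Matrix (Fin 2) (Fin 2) ℂ) 1 1) := by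
  set a := (g : Matrix (Fin 2) (Fin 2) ℂ) 0 0 with ha
  set b := (g : Matrix (Fin 2) (Fin 2) ℂ) 0 1 with hb
  set c := (g : Matrix (Fin 2) (Fin 2) ℂ) 1 0 with hc
  set d := (g : Matrix (Fin 2) (Fin 2) ℂ) 1 1 with hd
  obtain ⟨v0, v1, hD⟩ : ∃ v0 v1 : ℂ,
      v0 * (c * v0 + d * v1) - v1 * (a * v0 + b * v1) ≠ 0 := by
    by_cases hc0 : c = 0
    · by_cases hb0 : b = 0
      · refine ⟨1, 1, ?_⟩
        have hne : a ≠ d := by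
          intro hh; exact hns ⟨hc0, hb0, hh⟩
        intro hcon
        apply hne
        linear_combination -hcon + hc0 - hb0
      · exact ⟨0, 1, by simpa using hb0⟩
    · exact ⟨1, 0, by simpa using hc0⟩
  obtain ⟨h, hmat⟩ := conj_companion g v0 v1 hD
  have hpg := hinv g h
  rw [hmat] at hpg
  rw [qPoly_eval]
  exact hpg.symm

lemma scalar_case (P : MvPolynomial (Fin 2 × Fin 2) ℂ)
    (hinv : ∀ g h : SL(2, ℂ),
      MvPolynomial.eval
          (fun p => ((h * g * h⁻¹ : SL(2, ℂ)) : Matrix (Fin 2) (Fin 2) ℂ) p.1 p.2) P =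
        MvPolynomial.eval (fun p => ((g : Matrix (Fin 2) (Fin 2) ℂ)) p.1 p.2) P)
    (e : ℂ) (he : e = 1 ∨ e = -1) :
    MvPolynomial.eval
        (fun p : Fin 2 × Fin 2 => (!![e, 0; 0, e] : Matrix (Fin 2) (Fin 2) ℂ) p.1 p.2) P =
      (qPoly P).eval (e + e) := by
  set r : Polynomial ℂ := MvPolynomial.aeval
    (fun p : Fin 2 × Fin 2 =>
      (!![Polynomial.C e, Polynomial.X; 0, Polynomial.C e]
        : Matrix (Fin 2) (Fin 2) (Polynomial ℂ)) p.1 p.2) P with hr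
  have hee : e * e = 1 := by rcases he with h | h <;> rw [h] <;> ring
  have hreval : ∀ s : ℂ, r.eval s =
      MvPolynomial.eval
        (fun p : Fin 2 × Fin 2 => (!![e, s; 0, e] : Matrix (Fin 2) (Fin 2) ℂ) p.1 p.2) P := by
    intro s
    rw [hr, eval_aeval_mv]
    have hf : (fun i : Fin 2 × Fin 2 =>
        Polynomial.eval s ((!![Polynomial.C e, Polynomial.X; 0, Polynomial.C e]
          : Matrix (Fin 2) (Fin 2) (Polynomial ℂ)) i.1 i.2)) =
        fun p : Fin 2 × Fin 2 => (!![e, s; 0, e] : Matrix (Fin 2) (Fin 2) ℂ) p.1 p.2 := by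
      funext p
      obtain ⟨i, j⟩ := p
      fin_cases i <;> fin_cases j <;> simp
    rw [hf]
  have hkey : ∀ s : ℂ, s ≠ 0 → r.eval s = (qPoly P).eval (e + e) := by
    intro s hs
    set u : SL(2, ℂ) := ⟨!![e, s; 0, e], by simp [Matrix.det_fin_two_of, hee]⟩ with hu
    have hu0 : (u : Matrix (Fin 2) (Fin 2) ℂ) = !![e, s; 0, e] := rfl
    have hns : ¬((u : Matrix (Fin 2) (Fin 2) ℂ) 1 0 = 0 ∧ (u : Matrix (Fin 2) (Fin 2) ℂ) 0 1 = 0 ∧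
        (u : Matrix (Fin 2) (Fin 2) ℂ) 0 0 = (u : Matrix (Fin 2) (Fin 2) ℂ) 1 1) := by
      rw [hu0]
      intro hh
      exact hs (by simpa using hh.2.1)
    have hmain := main_nonscalar P hinv u hns
    rw [hu0] at hmain
    have hentry : (!![e, s; 0, e] : Matrix (Fin 2) (Fin 2) ℂ) 0 0
        + (!![e, s; 0, e] : Matrix (Fin 2) (Fin 2) ℂ) 1 1 = e + e := by simp
    rw [hentry] at hmain
    rw [hreval s]
    exact hmain
  have hconst : r = Polynomial.C ((qPoly P).eval (e + e)) := by
    apply Polynomial.eq_of_infinite_eval_eq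
    apply Set.Infinite.mono (s := {x : ℂ | x ≠ 0})
    · intro x hx
      simp only [Set.mem_setOf_eq] at hx ⊢
      rw [hkey x hx, Polynomial.eval_C]
    · have h0c : {x : ℂ | x ≠ 0} = ({0} : Set ℂ)ᶜ := by ext x; simp
      rw [h0c]
      exact (Set.finite_singleton 0).infinite_compl
  have h0 : r.eval 0 = (qPoly P).eval (e + e) := by rw [hconst, Polynomial.eval_C]
  rw [← h0, hreval 0]

/-- Any polynomial function on `M₂(ℂ)` (a polynomial in the four matrix entries) that is
invariant under conjugation by `SL(2,ℂ)` is, on `SL(2,ℂ)`, a polynomial in the trace. -/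
theorem invariant_polynomial_is_polynomial_in_trace
    (P : MvPolynomial (Fin 2 × Fin 2) ℂ)
    (hinv : ∀ g h : SL(2, ℂ),
      MvPolynomial.eval
          (fun p => ((h * g * h⁻¹ : SL(2, ℂ)) : Matrix (Fin 2) (Fin 2) ℂ) p.1 p.2) P =
        MvPolynomial.eval (fun p => ((g : Matrix (Fin 2) (Fin 2) ℂ)) p.1 p.2) P) :
    ∃ q : Polynomial ℂ, ∀ g : SL(2, ℂ),
      MvPolynomial.eval (fun p => ((g : Matrix (Fin 2) (Fin 2) ℂ)) p.1 p.2) P =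
        q.eval (Matrix.trace ((g : Matrix (Fin 2) (Fin 2) ℂ))) := by
  refine ⟨qPoly P, fun g => ?_⟩
  rw [Matrix.trace_fin_two]
  by_cases hns : (g : Matrix (Fin 2) (Fin 2) ℂ) 1 0 = 0 ∧ (g : Matrix (Fin 2) (Fin 2) ℂ) 0 1 = 0 ∧
      (g : Matrix (Fin 2) (Fin 2) ℂ) 0 0 = (g : Matrix (Fin 2) (Fin 2) ℂ) 1 1
  · obtain ⟨hc0, hb0, had⟩ := hns
    set e := (g : Matrix (Fin 2) (Fin 2) ℂ) 0 0 with he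
    have hdetg : e * e = 1 := by
      have h2 := g.2
      rw [Matrix.det_fin_two] at h2
      linear_combination h2 + e * had + (g : Matrix (Fin 2) (Fin 2) ℂ) 0 1 * hc0
    have hee : e = 1 ∨ e = -1 := by
      have : (e - 1) * (e + 1) = 0 := by linear_combination hdetg
      rcases mul_eq_zero.1 this with h | h
      · left; linear_combination h
      · right; linear_combination h
    have hg : (g : Matrix (Fin 2) (Fin 2) ℂ) = !![e, 0; 0, e] := by
      rw [Matrix.eta_fin_two (g : Matrix (Fin 2) (Fin 2) ℂ), ← he, ← had, hb0, hc0]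
    rw [hg]
    have hentry : (!![e, 0; 0, e] : Matrix (Fin 2) (Fin 2) ℂ) 1 1 = e := by simp
    rw [hentry]
    exact scalar_case P hinv e hee
  · have := main_nonscalar P hinv g hns
    exact this
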